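/- arXiv:2205.07695 — 4 statements merged into one kernel-verified Lean document; each statement's English description precedes it below -/
import Mathlib

section
/- Let s be an element of a unital C*-algebra with -1 < Im s < 1 (i.e., 1 + Im s and 1 - Im s are both positive and invertible). Then s+i and s-i are invertible, with ‖(s+i)⁻¹‖ ≤ ‖(1+Im s)⁻¹‖ and ‖(s-i)⁻¹‖ ≤ ‖(1-Im s)⁻¹‖. -/
open Complex

/-- The imaginary part `Im s = (s - s*)/(2i)` of an element of a complex star algebra. -/
noncomputable def imPart {A : Type*} [Ring A] [StarRing A] [Module ℂ A] (s : A) : A :=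
  ((2 * Complex.I)⁻¹ : ℂ) • (s - star s)

section Aux

set_option linter.unusedSectionVars false

variable {A : Type*} [CStarAlgebra A] [PartialOrder A] [StarOrderedRing A]

lemma isUnit_sa_add_I (x : A) (hx : IsSelfAdjoint x) : IsUnit (x + Complex.I • (1 : A)) := by
  have h : (-Complex.I) ∉ spectrum ℂ x := fun h => by
    simpa using hx.im_eq_zero_of_mem_spectrum h
  rw [spectrum.notMem_iff] at h
  have := h.neg
  rw [Algebra.algebraMap_eq_smul_one, neg_sub] at this
  rwa [neg_smul, sub_neg_eq_add] at this

lemma star_mul_self_sa_add_I (x : A) (hx : IsSelfAdjoint x) :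
    star (x + Complex.I • (1 : A)) * (x + Complex.I • (1 : A)) = x * x + 1 := by
  rw [star_add, star_smul, hx.star_eq, star_one, Complex.star_def, Complex.conj_I]
  rw [add_mul, mul_add, mul_add, mul_smul_comm, mul_one, smul_mul_assoc, smul_mul_assoc]
  simp only [one_mul, smul_smul, neg_mul, Complex.I_mul_I, neg_neg, one_smul, neg_smul]
  abel

lemma norm_inv_sa_add_I_le (x : A) (hx : IsSelfAdjoint x) :
    ‖Ring.inverse (x + Complex.I • (1 : A))‖ ≤ 1 := by
  obtain ⟨u, hu⟩ := isUnit_sa_add_I x hx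
  set t := x + Complex.I • (1 : A) with ht
  set v : Aˣ := star u * u with hvdef
  have hv : (↑v : A) = x * x + 1 := by
    rw [hvdef, Units.val_mul, Units.coe_star, hu, star_mul_self_sa_add_I x hx]
  have h1le : (1 : A) ≤ (↑v : A) := by
    rw [hv, le_add_iff_nonneg_left]
    simpa [hx.star_eq] using star_mul_self_nonneg x
  have hinvle : (↑v⁻¹ : A) ≤ 1 := CStarAlgebra.inv_le_one h1le
  have hinvnn : (0 : A) ≤ (↑v⁻¹ : A) :=
    CFC.inv_nonneg_of_nonneg _ (zero_le_one.trans h1le)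
  have hnorm : ‖(↑v⁻¹ : A)‖ ≤ 1 :=
    (CStarAlgebra.norm_le_one_iff_of_nonneg _ hinvnn).mpr hinvle
  have key : Ring.inverse t * star (Ring.inverse t) = (↑v⁻¹ : A) := by
    rw [← hu, Ring.inverse_unit, hvdef, mul_inv_rev, Units.val_mul, ← Units.coe_star_inv]
  have := CStarRing.norm_self_mul_star (x := Ring.inverse t)
  rw [key] at this
  nlinarith [norm_nonneg (Ring.inverse t)]

lemma key_lemma (a b : A) (ha : IsSelfAdjoint a) (hb : 0 ≤ b) (hbu : IsUnit b) :
    IsUnit (a + Complex.I • b) ∧ ‖Ring.inverse (a + Complex.I • b)‖ ≤ ‖Ring.inverse b‖ := by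
  obtain ⟨ub, hub⟩ := hbu
  set c := CFC.sqrt b with hcdef
  have hc : 0 ≤ c := CFC.sqrt_nonneg b
  have hcsa : IsSelfAdjoint c := .of_nonneg hc
  have hcc : c * c = b := CFC.sqrt_mul_sqrt_self b hb
  have hcb : Commute c b := by
    rw [Commute, SemiconjBy, ← hcc, ← mul_assoc]
  have hcbinv : Commute c (↑ub⁻¹ : A) := (hub ▸ hcb).units_inv_right
  have hviu : c * (c * ↑ub⁻¹) = 1 := by
    rw [← mul_assoc, hcc, ← hub, Units.mul_inv]
  have hiuv : (c * ↑ub⁻¹) * c = 1 := by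
    rw [mul_assoc, ← hcbinv.eq, ← mul_assoc, hcc, ← hub, Units.mul_inv]
  set uc : Aˣ := ⟨c, c * ↑ub⁻¹, hviu, hiuv⟩ with hucdef
  set c' : A := (↑uc⁻¹ : A) with hc'def
  have hcc' : c * c' = 1 := Units.mul_inv uc
  have hc'c : c' * c = 1 := Units.inv_mul uc
  have hc'sa : IsSelfAdjoint c' := by
    have h1 : c * star c' = 1 := by
      have := congrArg star hc'c
      rwa [star_mul, hcsa.star_eq, star_one] at this
    calc star c' = star c' * (c * c') := by rw [hcc', mul_one]
    _ = (star c' * c) * c' := by rw [mul_assoc]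
    _ = c' := by
        have : star c' * c = 1 := by
          have := congrArg star hcc'
          rwa [star_mul, hcsa.star_eq, star_one] at this
        rw [this, one_mul]
  set x : A := c' * a * c' with hxdef
  have hxsa : IsSelfAdjoint x := by
    rw [IsSelfAdjoint, hxdef, star_mul, star_mul, ha.star_eq, hc'sa.star_eq, mul_assoc]
  have hfact : a + Complex.I • b = c * (x + Complex.I • (1 : A)) * c := by
    rw [hxdef]
    simp only [mul_add, add_mul, mul_smul_comm, smul_mul_assoc, mul_one, one_mul]
    rw [← mul_assoc, ← mul_assoc, hcc']
    rw [one_mul, mul_assoc, hc'c, mul_one, hcc]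
  obtain ⟨u0, hu0⟩ := isUnit_sa_add_I x hxsa
  have hwval : ((uc * u0 * uc : Aˣ) : A) = a + Complex.I • b := by
    rw [Units.val_mul, Units.val_mul, hu0, hfact]
  refine ⟨⟨uc * u0 * uc, hwval⟩, ?_⟩
  have hinv : Ring.inverse (a + Complex.I • b) = c' * ↑u0⁻¹ * c' := by
    rw [← hwval, Ring.inverse_unit, mul_inv_rev, mul_inv_rev, Units.val_mul, Units.val_mul,
      ← hc'def, mul_assoc]
  have hbinv : Ring.inverse b = c' * c' := by
    have : ((uc * uc : Aˣ) : A) = b := by rw [Units.val_mul, hcc]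
    rw [← this, Ring.inverse_unit, mul_inv_rev, Units.val_mul]
  have hu0norm : ‖(↑u0⁻¹ : A)‖ ≤ 1 := by
    have := norm_inv_sa_add_I_le x hxsa
    rwa [← hu0, Ring.inverse_unit] at this
  have hcsq : ‖c'‖ * ‖c'‖ = ‖Ring.inverse b‖ := by
    rw [hbinv, ← CStarRing.norm_self_mul_star (x := c'), hc'sa.star_eq]
  calc ‖Ring.inverse (a + Complex.I • b)‖ = ‖c' * ↑u0⁻¹ * c'‖ := by rw [hinv]
    _ ≤ ‖c' * ↑u0⁻¹‖ * ‖c'‖ := norm_mul_le _ _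
    _ ≤ (‖c'‖ * ‖(↑u0⁻¹ : A)‖) * ‖c'‖ := by
        gcongr; exact norm_mul_le _ _
    _ ≤ (‖c'‖ * 1) * ‖c'‖ := by gcongr
    _ = ‖Ring.inverse b‖ := by rw [mul_one, hcsq]

end Aux

lemma Ring.inverse_neg'' {R : Type*} [Ring R] (y : R) :
    Ring.inverse (-y) = - Ring.inverse y := by
  by_cases h : IsUnit y
  · obtain ⟨u, rfl⟩ := h
    rw [← Units.val_neg, Ring.inverse_unit, Ring.inverse_unit]
    have h2 : (-u)⁻¹ = -(u⁻¹) := by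
      apply inv_eq_of_mul_eq_one_right
      rw [neg_mul_neg, mul_inv_cancel]
    rw [h2, Units.val_neg]
  · rw [Ring.inverse_non_unit _ h, Ring.inverse_non_unit, neg_zero]
    simpa using h

/-- If `s` is an element of a unital C*-algebra with `-1 < Im s < 1` (meaning that
`1 + Im s` and `1 - Im s` are positive and invertible), then `s + i` and `s - i` are
invertible with `‖(s+i)⁻¹‖ ≤ ‖(1+Im s)⁻¹‖` and `‖(s-i)⁻¹‖ ≤ ‖(1-Im s)⁻¹‖`. -/
theorem resolvent_bound_of_imPart
    {A : Type*} [NormedRing A] [StarRing A] [CStarRing A] [NormedAlgebra ℂ A]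
    [CompleteSpace A] [StarModule ℂ A] [PartialOrder A] [StarOrderedRing A]
    (s : A)
    (h₁pos : 0 ≤ (1 : A) + imPart s) (h₁ : IsUnit ((1 : A) + imPart s))
    (h₂pos : 0 ≤ (1 : A) - imPart s) (h₂ : IsUnit ((1 : A) - imPart s)) :
    IsUnit (s + Complex.I • (1 : A)) ∧ IsUnit (s - Complex.I • (1 : A)) ∧
    ‖Ring.inverse (s + Complex.I • (1 : A))‖ ≤ ‖Ring.inverse ((1 : A) + imPart s)‖ ∧
    ‖Ring.inverse (s - Complex.I • (1 : A))‖ ≤ ‖Ring.inverse ((1 : A) - imPart s)‖ := by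
  letI : CStarAlgebra A :=
    { toNormedRing := ‹_›, toStarRing := ‹_›, toCompleteSpace := ‹_›,
      toCStarRing := ‹_›, toNormedAlgebra := ‹_›, toStarModule := ‹_› }
  set m := imPart s with hm
  set a : A := ((2 : ℂ)⁻¹) • (s + star s) with hadef
  have ha : IsSelfAdjoint a := by
    rw [IsSelfAdjoint, hadef, star_smul, star_add, star_star]
    rw [show star (2 : ℂ)⁻¹ = (2 : ℂ)⁻¹ by simp [star_inv₀, star_ofNat], add_comm]
  have h2 : Complex.I * (2 * Complex.I)⁻¹ = 2⁻¹ := by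
    rw [mul_inv, ← mul_assoc, mul_comm Complex.I, mul_assoc,
      mul_inv_cancel₀ Complex.I_ne_zero, mul_one]
  have hdecomp : s = a + Complex.I • m := by
    rw [hadef, hm, imPart, smul_smul, h2]
    module
  have e1 : s + Complex.I • (1 : A) = a + Complex.I • ((1 : A) + m) := by
    rw [hdecomp, smul_add]; abel
  have e2 : s - Complex.I • (1 : A) = -((-a) + Complex.I • ((1 : A) - m)) := by
    rw [hdecomp, smul_sub]; abel
  obtain ⟨hu1, hn1⟩ := key_lemma a ((1 : A) + m) ha h₁pos h₁
  obtain ⟨hu2, hn2⟩ := key_lemma (-a) ((1 : A) - m) ha.neg h₂pos h₂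
  refine ⟨e1 ▸ hu1, ?_, ?_, ?_⟩
  · rw [e2]; exact hu2.neg
  · rw [e1]; exact hn1
  · rw [e2, Ring.inverse_neg'', norm_neg]; exact hn2
end

section
/- Let s be an element of a unital C*-algebra with -1 < Im s < 1. Then for ε ∈ {1,-1}, the element Ψ(s)^ε = ((s + εi)(s - εi)⁻¹)^ε is well defined and satisfies ‖Ψ(s)^ε‖ ≤ 1 + 2·max{‖(1 - Im s)⁻¹‖, ‖(1 + Im s)⁻¹‖}. -/
open Complex

section Aux
set_option linter.unusedSectionVars false

variable {A : Type*} [NormedRing A] [StarRing A] [CStarRing A] [NormedAlgebra ℂ A]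
    [CompleteSpace A] [StarModule ℂ A] [PartialOrder A] [StarOrderedRing A]

lemma imPart_eq_coe (s : A) : imPart s = (imaginaryPart s : A) := by
  rw [imPart, imaginaryPart_apply_coe, ← Complex.coe_smul, smul_smul]
  congr 1
  rw [mul_inv, inv_I]
  push_cast
  ring

/-- For a selfadjoint `c`, `c + i` is invertible with inverse of norm at most 1. -/
lemma selfAdjoint_add_I_unit {c : A} (hc : IsSelfAdjoint c) :
    ∃ u : Aˣ, (u : A) = c + Complex.I • 1 ∧ ‖(↑u⁻¹ : A)‖ ≤ 1 := by
  letI : CStarAlgebra A := ⟨⟩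
  have hspec : (-Complex.I) ∉ spectrum ℂ c := by
    intro h
    have := hc.mem_spectrum_eq_re h
    simp at this
  rw [spectrum.mem_iff, not_not] at hspec
  have h1 : IsUnit (c + Complex.I • 1) := by
    have := hspec.neg
    rwa [neg_sub, Algebra.algebraMap_eq_smul_one, neg_smul, sub_neg_eq_add] at this
  obtain ⟨u, hu⟩ := h1
  refine ⟨u, hu, ?_⟩
  have hb : star (u : A) * u = c * c + 1 := by
    rw [hu]
    rw [star_add, hc.star_eq, star_smul, star_one, Complex.star_def, Complex.conj_I, neg_smul]
    simp only [add_mul, mul_add, neg_mul, smul_mul_assoc, mul_smul_comm, one_mul, mul_one,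
      smul_smul, Complex.I_mul_I, neg_smul, one_smul, neg_neg]
    match_scalars <;> simp [Complex.I_sq]
  set b : Aˣ := star u * u with hbdef
  have hbval : (b : A) = c * c + 1 := by
    rw [hbdef, Units.val_mul, Units.coe_star, hb]
  have hcc : (0 : A) ≤ c * c := by
    simpa [hc.star_eq] using star_mul_self_nonneg c
  have hb1 : (1 : A) ≤ (b : A) := by
    rw [hbval]; exact le_add_of_nonneg_left hcc
  have h01 : (0 : A) ≤ (1 : A) := by simpa using star_mul_self_nonneg (1 : A)
  have hinv_le : ((b⁻¹ : Aˣ) : A) ≤ 1 := by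
    have h := CStarAlgebra.inv_le_inv (a := (1 : Aˣ)) (by simpa using h01) (by simpa using hb1)
    simpa using h
  have hb0 : (0 : A) ≤ (b : A) := le_trans h01 hb1
  have hinv_nonneg : (0 : A) ≤ ((b⁻¹ : Aˣ) : A) := CFC.inv_nonneg_of_nonneg b hb0
  have hnorm : ‖((b⁻¹ : Aˣ) : A)‖ ≤ 1 :=
    (CStarAlgebra.norm_le_one_iff_of_nonneg _ hinv_nonneg).mpr hinv_le
  have hbinv : ((b⁻¹ : Aˣ) : A) = (↑u⁻¹ : A) * star (↑u⁻¹ : A) := by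
    rw [hbdef, mul_inv_rev, Units.val_mul, Units.coe_star_inv]
  have hsq : ‖(↑u⁻¹ : A)‖ * ‖(↑u⁻¹ : A)‖ ≤ 1 := by
    rw [← CStarRing.norm_self_mul_star, ← hbinv]; exact hnorm
  nlinarith [norm_nonneg ((↑u⁻¹ : A))]

/-- If `x` is selfadjoint and `y` is nonneg and invertible, then `x + i y` is invertible
with inverse of norm at most `‖y⁻¹‖`. -/
lemma key_lemma_s3 {x y : A} (hx : IsSelfAdjoint x) (hy0 : 0 ≤ y) (hyu : IsUnit y) :
    IsUnit (x + Complex.I • y) ∧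
      ‖Ring.inverse (x + Complex.I • y)‖ ≤ ‖Ring.inverse y‖ := by
  letI : CStarAlgebra A := ⟨⟩
  obtain ⟨yu, hyuv⟩ := hyu
  set r := CFC.sqrt y with hrdef
  have hr0 : 0 ≤ r := CFC.sqrt_nonneg y
  have hr_sa : IsSelfAdjoint r := IsSelfAdjoint.of_nonneg hr0
  have hrr : r * r = y := CFC.sqrt_mul_sqrt_self y hy0
  have hcomm : Commute r (yu : A) := by
    rw [hyuv, ← hrr]; exact (Commute.refl r).mul_right (Commute.refl r)
  have h1 : r * (r * ↑yu⁻¹) = 1 := by rw [← mul_assoc, hrr, ← hyuv]; exact yu.mul_inv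
  have h2 : (r * ↑yu⁻¹) * r = 1 := by
    rw [mul_assoc, ← (hcomm.units_inv_right).eq]; exact h1
  set ru : Aˣ := ⟨r, r * ↑yu⁻¹, h1, h2⟩ with hrudef
  have hru : (ru : A) = r := rfl
  set ir : A := ↑ru⁻¹ with hirdef
  have h1' : r * ir = 1 := h1
  have h2' : ir * r = 1 := h2
  have hir_sa : IsSelfAdjoint ir := by
    have h3 : star ir * r = 1 := by
      have h := congrArg star h1'
      rwa [star_mul, star_one, hr_sa.star_eq] at h
    calc star ir = star ir * (r * ir) := by rw [h1', mul_one]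
      _ = (star ir * r) * ir := by rw [mul_assoc]
      _ = ir := by rw [h3, one_mul]
  have hinv_y : Ring.inverse y = ir * ir := by
    have hval : ((ru * ru : Aˣ) : A) = y := by rw [Units.val_mul, hru, hrr]
    calc Ring.inverse y = Ring.inverse ((ru * ru : Aˣ) : A) := by rw [hval]
      _ = ((ru * ru)⁻¹ : Aˣ) := Ring.inverse_unit _
      _ = ir * ir := by rw [mul_inv_rev, Units.val_mul]
  have hc : IsSelfAdjoint (ir * x * ir) := by
    have : star (ir * x * ir) = ir * x * ir := by
      simp only [star_mul, hir_sa.star_eq, hx.star_eq, mul_assoc]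
    exact this
  obtain ⟨cu, hcu, hcu_norm⟩ := selfAdjoint_add_I_unit hc
  have hkey : ((ru * cu * ru : Aˣ) : A) = x + Complex.I • y := by
    rw [Units.val_mul, Units.val_mul, hcu, hru]
    rw [mul_add, add_mul]
    have e1 : r * (ir * x * ir) * r = x := by
      simp only [mul_assoc]
      rw [h2', mul_one, ← mul_assoc, h1', one_mul]
    have e2 : r * (Complex.I • (1 : A)) * r = Complex.I • y := by
      rw [mul_smul_comm, mul_one, smul_mul_assoc, hrr]
    rw [e1, e2]
  refine ⟨⟨ru * cu * ru, hkey⟩, ?_⟩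
  have hinv : Ring.inverse (x + Complex.I • y) = ir * ↑cu⁻¹ * ir := by
    rw [← hkey, Ring.inverse_unit]
    rw [mul_inv_rev, mul_inv_rev, Units.val_mul, Units.val_mul, ← hirdef, mul_assoc]
  have hbound : ‖ir * ↑cu⁻¹ * ir‖ ≤ ‖ir‖ * ‖ir‖ := by
    calc ‖ir * ↑cu⁻¹ * ir‖ ≤ ‖ir * ↑cu⁻¹‖ * ‖ir‖ := norm_mul_le _ _
      _ ≤ (‖ir‖ * ‖(↑cu⁻¹ : A)‖) * ‖ir‖ :=
        mul_le_mul_of_nonneg_right (norm_mul_le _ _) (norm_nonneg _)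
      _ ≤ (‖ir‖ * 1) * ‖ir‖ := by
        have := mul_le_mul_of_nonneg_left hcu_norm (norm_nonneg ir)
        exact mul_le_mul_of_nonneg_right this (norm_nonneg _)
      _ = ‖ir‖ * ‖ir‖ := by rw [mul_one]
  have hnorm_ir : ‖ir‖ * ‖ir‖ = ‖Ring.inverse y‖ := by
    rw [hinv_y, ← CStarRing.norm_self_mul_star]
    rw [hir_sa.star_eq]
  rw [hinv, ← hnorm_ir]
  exact hbound

lemma imPart_sa (s : A) : IsSelfAdjoint (imPart s) := by
  rw [imPart_eq_coe]; exact (imaginaryPart s).2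

end Aux

/-- For `s` in a unital C*-algebra with `-1 < Im s < 1`, the Cayley transforms
`Ψ(s) = (s+i)(s-i)⁻¹` and `Ψ(s)⁻¹ = (s-i)(s+i)⁻¹` are well defined and both satisfy
`‖Ψ(s)^ε‖ ≤ 1 + 2·max{‖(1-Im s)⁻¹‖, ‖(1+Im s)⁻¹‖}` for `ε ∈ {±1}`. -/
theorem cayley_norm_bound
    {A : Type*} [NormedRing A] [StarRing A] [CStarRing A] [NormedAlgebra ℂ A]
    [CompleteSpace A] [StarModule ℂ A] [PartialOrder A] [StarOrderedRing A]
    (s : A)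
    (h₁pos : 0 ≤ (1 : A) + imPart s) (h₁ : IsUnit ((1 : A) + imPart s))
    (h₂pos : 0 ≤ (1 : A) - imPart s) (h₂ : IsUnit ((1 : A) - imPart s)) :
    IsUnit (s + Complex.I • (1 : A)) ∧ IsUnit (s - Complex.I • (1 : A)) ∧
    ‖(s + Complex.I • (1 : A)) * Ring.inverse (s - Complex.I • (1 : A))‖ ≤
      1 + 2 * max ‖Ring.inverse ((1 : A) - imPart s)‖ ‖Ring.inverse ((1 : A) + imPart s)‖ ∧
    ‖(s - Complex.I • (1 : A)) * Ring.inverse (s + Complex.I • (1 : A))‖ ≤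
      1 + 2 * max ‖Ring.inverse ((1 : A) - imPart s)‖ ‖Ring.inverse ((1 : A) + imPart s)‖ := by

  rcases subsingleton_or_nontrivial A with hsub | hnt
  · constructor
    · exact isUnit_of_subsingleton _
    refine ⟨isUnit_of_subsingleton _, ?_, ?_⟩ <;>
    · have h0 : ∀ a : A, ‖a‖ = 0 := fun a => by rw [Subsingleton.elim a 0, norm_zero]
      rw [h0]
      positivity
  have hone : ‖(1 : A)‖ ≤ 1 := le_of_eq CStarRing.norm_one
  have hx : IsSelfAdjoint ((realPart s : A)) := (realPart s).2
  have hsum : (realPart s : A) + Complex.I • (imPart s) = s := by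
    rw [imPart_eq_coe]; exact realPart_add_I_smul_imaginaryPart s
  -- the element `s + i`
  have ep : (realPart s : A) + Complex.I • ((1 : A) + imPart s) = s + Complex.I • (1 : A) := by
    rw [smul_add, show (realPart s : A) + (Complex.I • (1 : A) + Complex.I • imPart s)
      = ((realPart s : A) + Complex.I • imPart s) + Complex.I • (1 : A) from by abel, hsum]
  have hp := key_lemma_s3 hx h₁pos h₁
  rw [ep] at hp
  -- the element `s - i`
  have em : (-(realPart s : A)) + Complex.I • ((1 : A) - imPart s)
      = -(s - Complex.I • (1 : A)) := by
    rw [smul_sub, show (-(realPart s : A)) + (Complex.I • (1 : A) - Complex.I • imPart s)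
      = -(((realPart s : A) + Complex.I • imPart s) - Complex.I • (1 : A)) from by abel, hsum]
  have hm2 := key_lemma_s3 hx.neg h₂pos h₂
  rw [em] at hm2
  obtain ⟨w, hw⟩ := hm2.1
  have hUm : IsUnit (s - Complex.I • (1 : A)) := by
    refine ⟨-w, ?_⟩
    rw [Units.val_neg, hw, neg_neg]
  have hinv_m : Ring.inverse (s - Complex.I • (1 : A)) = -Ring.inverse (-(s - Complex.I • (1 : A))) := by
    have hval : ((-w : Aˣ) : A) = s - Complex.I • (1 : A) := by rw [Units.val_neg, hw, neg_neg]
    rw [← hw, ← hval, Ring.inverse_unit, Ring.inverse_unit, inv_neg, Units.val_neg]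
  have hnm : ‖Ring.inverse (s - Complex.I • (1 : A))‖ ≤ ‖Ring.inverse ((1 : A) - imPart s)‖ := by
    rw [hinv_m, norm_neg]; exact hm2.2
  refine ⟨hp.1, hUm, ?_, ?_⟩
  · -- Ψ(s) = 1 + (2i) • (s-i)⁻¹
    have hdec : s + Complex.I • (1 : A)
        = (s - Complex.I • (1 : A)) + ((2 * Complex.I) • (1 : A)) := by
      match_scalars <;> ring
    have : (s + Complex.I • (1 : A)) * Ring.inverse (s - Complex.I • (1 : A))
        = 1 + (2 * Complex.I) • Ring.inverse (s - Complex.I • (1 : A)) := by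
      rw [hdec, add_mul, Ring.mul_inverse_cancel _ hUm, smul_mul_assoc, one_mul]
    rw [this]
    calc ‖(1 : A) + (2 * Complex.I) • Ring.inverse (s - Complex.I • (1 : A))‖
        ≤ ‖(1 : A)‖ + ‖(2 * Complex.I) • Ring.inverse (s - Complex.I • (1 : A))‖ :=
          norm_add_le _ _
      _ ≤ 1 + 2 * ‖Ring.inverse ((1 : A) - imPart s)‖ := by
          rw [norm_smul]
          have h2I : ‖(2 * Complex.I : ℂ)‖ = 2 := by
            simp
          rw [h2I]
          exact add_le_add hone (mul_le_mul_of_nonneg_left hnm (by norm_num))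
      _ ≤ 1 + 2 * max ‖Ring.inverse ((1 : A) - imPart s)‖ ‖Ring.inverse ((1 : A) + imPart s)‖ := by
          gcongr
          exact le_max_left _ _
  · have hdec : s - Complex.I • (1 : A)
        = (s + Complex.I • (1 : A)) - ((2 * Complex.I) • (1 : A)) := by
      match_scalars <;> ring
    have : (s - Complex.I • (1 : A)) * Ring.inverse (s + Complex.I • (1 : A))
        = 1 - (2 * Complex.I) • Ring.inverse (s + Complex.I • (1 : A)) := by
      rw [hdec, sub_mul, Ring.mul_inverse_cancel _ hp.1, smul_mul_assoc, one_mul]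
    rw [this]
    calc ‖(1 : A) - (2 * Complex.I) • Ring.inverse (s + Complex.I • (1 : A))‖
        ≤ ‖(1 : A)‖ + ‖(2 * Complex.I) • Ring.inverse (s + Complex.I • (1 : A))‖ :=
          norm_sub_le _ _
      _ ≤ 1 + 2 * ‖Ring.inverse ((1 : A) + imPart s)‖ := by
          rw [norm_smul]
          have h2I : ‖(2 * Complex.I : ℂ)‖ = 2 := by
            simp
          rw [h2I]
          exact add_le_add hone (mul_le_mul_of_nonneg_left hp.2 (by norm_num))
      _ ≤ 1 + 2 * max ‖Ring.inverse ((1 : A) - imPart s)‖ ‖Ring.inverse ((1 : A) + imPart s)‖ := by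
          gcongr
          exact le_max_right _ _
end

section
/- For a self-adjoint element Z of a unital C*-algebra and ε ∈ {1,-1}, the Bochner integral identity (Z + εi)(Z - εi)⁻¹ = 1 - 2·∫_{-∞}^{0} e^{(iεZ+1)y} dy holds, where e^{(iεZ+1)y} = e^y·e^{iεZy}. -/
open Complex MeasureTheory

section Aux

variable {A : Type*} [NormedRing A] [StarRing A] [CStarRing A] [NormedAlgebra ℂ A]
    [CompleteSpace A] [StarModule ℂ A]

/-- Norm of the exponential of a scaled shifted skew element. -/
lemma cayley_aux_norm [Nontrivial A] (Z : A) (hZ : IsSelfAdjoint Z) (ε : ℂ)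
    (hεc : (starRingEnd ℂ) ε = ε) (y : ℝ) :
    ‖NormedSpace.exp (y • ((Complex.I * ε) • Z + (1 : A)))‖ = Real.exp y := by
  letI : NormedAlgebra ℚ A := .restrictScalars ℚ ℂ A
  have hsk : ((y : ℂ) * (Complex.I * ε)) • Z ∈ skewAdjoint A := by
    rw [skewAdjoint.mem_iff, star_smul, hZ.star_eq, ← neg_smul]
    congr 1
    simp [map_mul, hεc, Complex.conj_ofReal]
  have hu : NormedSpace.exp (((y : ℂ) * (Complex.I * ε)) • Z) ∈ unitary A :=
    NormedSpace.exp_mem_unitary_of_mem_skewAdjoint hsk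
  have hsplit : y • ((Complex.I * ε) • Z + (1 : A))
      = ((y : ℂ) * (Complex.I * ε)) • Z + (y : ℂ) • (1 : A) := by
    rw [smul_add]
    congr 1
    rw [← algebraMap_smul ℂ y ((Complex.I * ε) • Z), smul_smul]; rfl
  have hcomm : Commute (((y : ℂ) * (Complex.I * ε)) • Z) ((y : ℂ) • (1 : A)) :=
    (Commute.one_right _).smul_right _
  have h1 : NormedSpace.exp ((y : ℂ) • (1 : A))
      = algebraMap ℂ A (NormedSpace.exp (y : ℂ)) := by
    rw [← Algebra.algebraMap_eq_smul_one, ← NormedSpace.algebraMap_exp_comm]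
  rw [hsplit, NormedSpace.exp_add_of_commute hcomm, h1,
    CStarRing.norm_mem_unitary_mul _ hu, norm_algebraMap',
    ← Complex.exp_eq_exp_ℂ, Complex.norm_exp, Complex.ofReal_re]

end Aux

set_option maxHeartbeats 1000000 in
/-- For a selfadjoint element `Z` of a unital C*-algebra and `ε ∈ {±1}`,
`(Z+εi)(Z-εi)⁻¹ = 1 - 2·∫_{-∞}^0 e^{(iεZ+1)y} dy` (Bochner integral),
where `e^{(iεZ+1)y} = e^y·e^{iεZy}`. -/
theorem cayley_exp_integral
    {A : Type*} [NormedRing A] [StarRing A] [CStarRing A] [NormedAlgebra ℂ A]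
    [CompleteSpace A] [StarModule ℂ A]
    (Z : A) (hZ : IsSelfAdjoint Z) (ε : ℂ) (hε : ε = 1 ∨ ε = -1) :
    IsUnit (Z - (ε * Complex.I) • (1 : A)) ∧
    (Z + (ε * Complex.I) • (1 : A)) * Ring.inverse (Z - (ε * Complex.I) • (1 : A)) =
      (1 : A) - (2 : ℂ) •
        ∫ y in Set.Iic (0 : ℝ),
          NormedSpace.exp (((y : ℂ)) • ((Complex.I * ε) • Z + 1)) := by
  rcases subsingleton_or_nontrivial A with hA | hA
  · exact ⟨isUnit_of_subsingleton _, Subsingleton.elim _ _⟩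
  letI : CStarAlgebra A := ⟨⟩
  letI : NormedAlgebra ℚ A := .restrictScalars ℚ ℂ A
  have hεc : (starRingEnd ℂ) ε = ε := by rcases hε with h | h <;> simp [h]
  have hεne : ε ≠ 0 := by rcases hε with h | h <;> simp [h]
  have hε2 : ε * ε = 1 := by rcases hε with h | h <;> simp [h]
  -- invertibility of `Z - εi`
  have hU : IsUnit (Z - (ε * Complex.I) • (1 : A)) := by
    have hns : ε * Complex.I ∉ spectrum ℂ Z := by
      intro hmem
      have := hZ.mem_spectrum_eq_re hmem
      have hre : (ε * Complex.I).re = 0 := by rcases hε with h | h <;> simp [h]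
      rw [hre] at this
      exact (mul_ne_zero hεne Complex.I_ne_zero) (by simpa using this)
    rw [spectrum.notMem_iff] at hns
    rw [Algebra.algebraMap_eq_smul_one] at hns
    have := hns.neg
    simpa [neg_sub] using this
  refine ⟨hU, ?_⟩
  set B : A := (Complex.I * ε) • Z + 1 with hBdef
  have hBfac : B = (Complex.I * ε) • (Z - (ε * Complex.I) • (1 : A)) := by
    rw [smul_sub, smul_smul]
    have : Complex.I * ε * (ε * Complex.I) = -1 := by
      rw [show Complex.I * ε * (ε * Complex.I) = (ε * ε) * (Complex.I * Complex.I) by ring,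
        hε2, Complex.I_mul_I, one_mul]
    rw [this, neg_smul, one_smul, sub_neg_eq_add]
  have hBu : IsUnit B := by
    rw [hBfac, Algebra.smul_def]
    exact ((isUnit_iff_ne_zero.mpr (mul_ne_zero Complex.I_ne_zero hεne)).map
      (algebraMap ℂ A)).mul hU
  set u : A := Ring.inverse B with hudef
  have hBu1 : B * u = 1 := Ring.mul_inverse_cancel _ hBu
  have hexpeq : (NormedSpace.exp : A → A) = NormedSpace.exp := rfl
  have hnorm : ∀ y : ℝ, ‖NormedSpace.exp (y • B)‖ = Real.exp y :=
    cayley_aux_norm Z hZ ε hεc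
  have hkey : (∫ y in Set.Iic (0:ℝ), NormedSpace.exp ((y:ℂ) • B)) = u := by
    have hIic : (∫ y in Set.Iic (0:ℝ), NormedSpace.exp ((y:ℂ) • B))
        = ∫ y in Set.Iic (0:ℝ), NormedSpace.exp (y • B) := by
      congr 1 with y
    have hneg : (∫ y in Set.Ioi (0:ℝ), NormedSpace.exp ((-y) • B))
        = ∫ y in Set.Iic (0:ℝ), NormedSpace.exp (y • B) := by
      simpa using integral_comp_neg_Ioi (c := 0)
        (f := fun y : ℝ => NormedSpace.exp (y • B))
    have hcont : Continuous fun y : ℝ => NormedSpace.exp ((-y) • B) :=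
      NormedSpace.exp_continuous.comp (continuous_neg.smul continuous_const)
    have hint : IntegrableOn (fun y : ℝ => NormedSpace.exp ((-y) • B)) (Set.Ioi 0) := by
      refine (exp_neg_integrableOn_Ioi 0 one_pos).mono' hcont.aestronglyMeasurable ?_
      filter_upwards with y
      rw [hnorm (-y), neg_one_mul]
    have hder : ∀ y ∈ Set.Ici (0:ℝ),
        HasDerivAt (fun y : ℝ => -(NormedSpace.exp ((-y) • B) * u))
          (NormedSpace.exp ((-y) • B)) y := by
      intro y _
      have h0 : HasDerivAt (fun t : ℝ => NormedSpace.exp (t • (-B)))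
          (NormedSpace.exp (y • (-B)) * (-B)) y := hasDerivAt_exp_smul_const (-B) y
      have h1 : HasDerivAt (fun t : ℝ => NormedSpace.exp ((-t) • B))
          (NormedSpace.exp ((-y) • B) * (-B)) y := by
        simpa only [hexpeq, smul_neg, ← neg_smul] using h0
      have h2 := (h1.mul_const u).neg
      have h3 : -(NormedSpace.exp ((-y) • B) * -B * u)
          = NormedSpace.exp ((-y) • B) := by
        rw [mul_neg, neg_mul, neg_neg, mul_assoc, hBu1, mul_one]
      rw [← h3]
      exact h2
    have htend : Filter.Tendsto (fun y : ℝ => -(NormedSpace.exp ((-y) • B) * u)) Filter.atTop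
        (nhds (0 : A)) := by
      rw [← neg_zero]
      refine Filter.Tendsto.neg (squeeze_zero_norm (a := fun y => Real.exp (-y) * ‖u‖) (fun y => ?_) ?_)
      · calc ‖NormedSpace.exp ((-y) • B) * u‖
            ≤ ‖NormedSpace.exp ((-y) • B)‖ * ‖u‖ := norm_mul_le _ _
          _ = Real.exp (-y) * ‖u‖ := by rw [hnorm]
      · simpa using Real.tendsto_exp_neg_atTop_nhds_zero.mul_const ‖u‖
    have hFTC := integral_Ioi_of_hasDerivAt_of_tendsto' hder hint htend
    rw [hIic, ← hneg, hFTC]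
    simp [NormedSpace.exp_zero]
  rw [hkey]
  set v : A := Ring.inverse (Z - (ε * Complex.I) • (1 : A)) with hvdef
  have hv1 : (Z - (ε * Complex.I) • (1 : A)) * v = 1 := Ring.mul_inverse_cancel _ hU
  have hBv : B * ((-(Complex.I * ε)) • v) = 1 := by
    rw [hBfac, smul_mul_smul_comm, hv1,
      show Complex.I * ε * -(Complex.I * ε) = -(Complex.I * Complex.I * (ε * ε)) by ring,
      Complex.I_mul_I, hε2, mul_one, neg_neg, one_smul]
  have huv : u = (-(Complex.I * ε)) • v := by
    calc u = u * (B * ((-(Complex.I * ε)) • v)) := by rw [hBv, mul_one]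
      _ = (u * B) * ((-(Complex.I * ε)) • v) := (mul_assoc _ _ _).symm
      _ = (-(Complex.I * ε)) • v := by rw [Ring.inverse_mul_cancel _ hBu, one_mul]
  rw [huv]
  have hZsplit : Z + (ε * Complex.I) • (1 : A)
      = (Z - (ε * Complex.I) • (1 : A)) + (ε * Complex.I + ε * Complex.I) • (1 : A) := by
    rw [add_smul]; abel
  rw [hZsplit, add_mul, hv1, smul_mul_assoc, one_mul, smul_smul]
  rw [show (2:ℂ) * -(Complex.I * ε) = -(ε * Complex.I + ε * Complex.I) by ring, neg_smul,
    sub_neg_eq_add]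
end

section
/- Let A be a unital C*-algebra and let s ∈ A satisfy ‖Im s‖ < ε for some ε ∈ (0,1). Then ‖Im(γ⊗Ψ(s) + γ*⊗Ψ(s)⁻¹)‖ ≤ 4‖γ‖·ε/(1-ε)² for any matrix γ ∈ M_m(ℂ), where Ψ(s) = (s+i)(s-i)⁻¹ and the imaginary part is taken in M_m(ℂ)⊗A. -/
open Complex
open scoped Matrix.Norms.L2Operator

section Aux

variable {A : Type*} [CStarAlgebra A] [PartialOrder A] [StarOrderedRing A]

private lemma algMapSA (r : ℝ) : star (algebraMap ℝ A r) = algebraMap ℝ A r :=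
  (IsSelfAdjoint.algebraMap A (star_trivial r)).star_eq

private lemma algMapNonneg {r : ℝ} (hr : 0 ≤ r) : 0 ≤ algebraMap ℝ A r := by
  have h1 : algebraMap ℝ A r
      = star (algebraMap ℝ A (Real.sqrt r)) * algebraMap ℝ A (Real.sqrt r) := by
    rw [algMapSA, ← map_mul, Real.mul_self_sqrt hr]
  rw [h1]
  exact star_mul_self_nonneg _

private lemma algMapMono {r t : ℝ} (h : r ≤ t) :
    algebraMap ℝ A r ≤ algebraMap ℝ A t := by
  rw [← sub_nonneg, ← map_sub]
  exact algMapNonneg (by linarith)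

/-- Key invertibility lemma: if `a` is selfadjoint and `h ≥ δ > 0` with `‖h⁻¹‖ ≤ δ⁻¹`,
then `a + i h` is invertible with inverse of norm at most `δ⁻¹`. -/
private lemma aux_unit {a h : A} (ha : IsSelfAdjoint a) (hh : IsSelfAdjoint h)
    {δ : ℝ} (hδ : 0 < δ) (hle : algebraMap ℝ A δ ≤ h)
    (hinv : ‖Ring.inverse h‖ ≤ δ⁻¹) :
    IsUnit (a + Complex.I • h) ∧ ‖Ring.inverse (a + Complex.I • h)‖ ≤ δ⁻¹ := by
  have halg0 : (0 : A) ≤ algebraMap ℝ A δ := algMapNonneg hδ.le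
  have halgU : IsUnit (algebraMap ℝ A δ) :=
    (isUnit_iff_ne_zero.mpr hδ.ne').map (algebraMap ℝ A)
  have hhu : IsUnit h := CStarAlgebra.isUnit_of_le _ hle (halgU.isStrictlyPositive halg0)
  set k := Ring.inverse h with hk
  have hk1 : k * h = 1 := Ring.inverse_mul_cancel h hhu
  have hk2 : h * k = 1 := Ring.mul_inverse_cancel h hhu
  have hksa : IsSelfAdjoint k := by
    rw [IsSelfAdjoint, hk, ← Ring.inverse_star, hh.star_eq]
  have hh0 : (0 : A) ≤ h := halg0.trans hle
  have hk0 : (0 : A) ≤ k := by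
    have := star_left_conjugate_nonneg hh0 k
    rwa [hksa.star_eq, hk1, one_mul] at this
  set c := Complex.I • h with hc
  set x := a + c with hx
  have hxs : star x = a - c := by
    rw [hx, hc, star_add, star_smul, hh.star_eq, ha.star_eq, Complex.star_def,
      Complex.conj_I, neg_smul, ← sub_eq_add_neg]
  have hck : c * k = Complex.I • 1 := by rw [hc, smul_mul_assoc, hk2]
  have hkc : k * c = Complex.I • 1 := by rw [hc, mul_smul_comm, hk1]
  -- the two conjugation identities
  have key1 : star x * k * x = a * k * a + h := by
    rw [hxs, hx, sub_mul, hck, sub_mul, mul_add, mul_add, mul_assoc a k c, hkc,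
      mul_smul_comm, mul_one, smul_mul_assoc, smul_mul_assoc, one_mul, one_mul, hc,
      smul_smul, Complex.I_mul_I, neg_one_smul]
    abel
  have key2 : x * k * star x = a * k * a + h := by
    rw [hxs, hx, add_mul, hck, add_mul, mul_sub, mul_sub, mul_assoc a k c, hkc,
      mul_smul_comm, mul_one, smul_mul_assoc, smul_mul_assoc, one_mul, one_mul, hc,
      smul_smul, Complex.I_mul_I, neg_one_smul, sub_neg_eq_add]
    abel
  have haka : (0 : A) ≤ a * k * a := by
    have := star_left_conjugate_nonneg hk0 a
    rwa [ha.star_eq] at this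
  have hq : algebraMap ℝ A δ ≤ a * k * a + h :=
    hle.trans (le_add_of_nonneg_left haka)
  have hqu : IsUnit (a * k * a + h) := CStarAlgebra.isUnit_of_le _ hq (halgU.isStrictlyPositive halg0)
  set q := a * k * a + h with hqdef
  set r := Ring.inverse q with hr
  have hr1 : r * q = 1 := Ring.inverse_mul_cancel q hqu
  have hr2 : q * r = 1 := Ring.mul_inverse_cancel q hqu
  -- x is a unit
  have hux : (r * (star x * k)) * x = 1 := by
    rw [mul_assoc, key1, hr1]
  have hxv : x * (k * star x * r) = 1 := by
    rw [← mul_assoc, ← mul_assoc, key2, hr2]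
  have huv : r * (star x * k) = k * star x * r := by
    calc r * (star x * k) = r * (star x * k) * (x * (k * star x * r)) := by rw [hxv, mul_one]
      _ = (r * (star x * k) * x) * (k * star x * r) := by noncomm_ring
      _ = k * star x * r := by rw [hux, one_mul]
  have hxu : IsUnit x := ⟨⟨x, k * star x * r, hxv, by rw [← huv, hux]⟩, rfl⟩
  refine ⟨hxu, ?_⟩
  set y := Ring.inverse x with hy
  have hy1 : y * x = 1 := Ring.inverse_mul_cancel x hxu
  have hy2 : x * y = 1 := Ring.mul_inverse_cancel x hxu
  -- conjugate the inequality `δ ≤ q` by `y`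
  have hconj : star y * algebraMap ℝ A δ * y ≤ star y * q * y :=
    star_left_conjugate_le_conjugate hq y
  have hsyx : star y * star x = 1 := by rw [← star_mul, hy2, star_one]
  have hxyy : star y * q * y = k := by
    rw [← key1]
    calc star y * (star x * k * x) * y
        = (star y * star x) * k * (x * y) := by noncomm_ring
      _ = k := by rw [hsyx, hy2, one_mul, mul_one]
  have hleft : star y * algebraMap ℝ A δ * y = δ • (star y * y) := by
    rw [Algebra.algebraMap_eq_smul_one, mul_smul_comm, mul_one, smul_mul_assoc]
  have hkbound : k ≤ algebraMap ℝ A δ⁻¹ :=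
    hksa.le_algebraMap_norm_self.trans (algMapMono hinv)
  have hfinal : δ • (star y * y) ≤ algebraMap ℝ A δ⁻¹ := by
    rw [← hleft]
    exact hconj.trans (hxyy ▸ hkbound)
  have hpos : (0 : A) ≤ δ • (star y * y) := by
    have h1 := star_left_conjugate_nonneg (star_mul_self_nonneg y) (algebraMap ℝ A (Real.sqrt δ))
    have h2 : algebraMap ℝ A (Real.sqrt δ) * (star y * y) * algebraMap ℝ A (Real.sqrt δ)
        = δ • (star y * y) := by
      calc algebraMap ℝ A (Real.sqrt δ) * (star y * y) * algebraMap ℝ A (Real.sqrt δ)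
          = algebraMap ℝ A (Real.sqrt δ) * (algebraMap ℝ A (Real.sqrt δ) * (star y * y)) := by
            rw [mul_assoc, ← Algebra.commutes]
        _ = (algebraMap ℝ A (Real.sqrt δ) * algebraMap ℝ A (Real.sqrt δ)) * (star y * y) := by
            rw [mul_assoc]
        _ = algebraMap ℝ A δ * (star y * y) := by rw [← map_mul, Real.mul_self_sqrt hδ.le]
        _ = δ • (star y * y) := (Algebra.smul_def _ _).symm
    rwa [algMapSA, h2] at h1
  have hnorm : ‖δ • (star y * y)‖ ≤ δ⁻¹ :=
    (CStarAlgebra.norm_le_iff_le_algebraMap _ (by positivity) hpos).mpr hfinal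
  rw [norm_smul, Real.norm_eq_abs, abs_of_pos hδ, CStarRing.norm_star_mul_self] at hnorm
  have hδy : 0 ≤ δ * ‖y‖ := by positivity
  have h3 : (δ * ‖y‖) ^ 2 ≤ 1 := by
    have := mul_le_mul_of_nonneg_left hnorm hδ.le
    have h4 := mul_inv_cancel₀ hδ.ne'
    nlinarith [norm_nonneg y]
  have h4 : δ * ‖y‖ ≤ 1 := by nlinarith
  calc ‖y‖ = δ⁻¹ * (δ * ‖y‖) := by field_simp
    _ ≤ δ⁻¹ * 1 := by
        have : (0:ℝ) ≤ δ⁻¹ := by positivity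
        exact mul_le_mul_of_nonneg_left h4 this
    _ = δ⁻¹ := mul_one _

end Aux

section IdAux

variable {A : Type*} [CStarAlgebra A]

/-- The algebraic identity behind the imaginary part of the Cayley transform. -/
private lemma aux_id (s : A) (μ : ℂ) (hμ : star μ = -μ) (hμ0 : μ ≠ 0)
    (h1 : IsUnit (s - μ • 1)) (h2 : IsUnit (s + μ • 1)) :
    (2 * μ)⁻¹ • ((s + μ • 1) * Ring.inverse (s - μ • 1)
        - star ((s - μ • 1) * Ring.inverse (s + μ • 1)))
      = star (Ring.inverse (s + μ • 1)) * (star s - s) * Ring.inverse (s - μ • 1) := by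
  set w := Ring.inverse (s - μ • 1) with hw
  set p := star (Ring.inverse (s + μ • 1)) with hp
  have hsp : star (s + μ • 1) = star s - μ • 1 := by
    rw [star_add, star_smul, star_one, hμ, neg_smul, ← sub_eq_add_neg]
  have hsm : star (s - μ • 1) = star s + μ • 1 := by
    rw [star_sub, star_smul, star_one, hμ, neg_smul, sub_neg_eq_add]
  have hp1 : p * (star s - μ • 1) = 1 := by
    rw [hp, ← Ring.inverse_star, hsp]
    exact Ring.inverse_mul_cancel _ (hsp ▸ h2.star)
  have hw1 : (s - μ • 1) * w = 1 := Ring.mul_inverse_cancel _ h1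
  have hstar : star ((s - μ • 1) * Ring.inverse (s + μ • 1)) = p * (star s + μ • 1) := by
    rw [star_mul, hsm, hp]
  rw [hstar]
  have e1 : (s + μ • 1) * w = p * ((star s - μ • 1) * (s + μ • 1)) * w := by
    rw [← mul_assoc, hp1, one_mul]
  have e2 : p * (star s + μ • 1) = p * ((star s + μ • 1) * (s - μ • 1)) * w := by
    rw [mul_assoc, mul_assoc, hw1, mul_one]
  have bracket : (star s - μ • 1) * (s + μ • 1) - (star s + μ • 1) * (s - μ • 1)
      = (2 * μ) • (star s - s) := by
    simp only [mul_add, add_mul, sub_mul, mul_sub, smul_mul_assoc, mul_smul_comm,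
      smul_smul, smul_sub, smul_add, mul_one, one_mul]
    module
  rw [e1, e2, ← sub_mul, ← mul_sub, bracket, mul_smul_comm, smul_mul_assoc, smul_smul,
    inv_mul_cancel₀ (by simpa using hμ0), one_smul, mul_assoc]

end IdAux

/-- Let `s` be an element of a unital C*-algebra `A` with `‖Im s‖ < ε` for some `ε ∈ (0,1)`.
Then, in the C*-tensor product `M_m(ℂ) ⊗ A` (realized via a pair of unital *-homomorphisms
`φ : M_m(ℂ) → B`, `ι : A → B` with commuting ranges into a unital C*-algebra `B`),
`‖Im(γ⊗Ψ(s) + γ*⊗Ψ(s)⁻¹)‖ ≤ 4‖γ‖·ε/(1-ε)²` for every `γ ∈ M_m(ℂ)`,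
where `Ψ(s) = (s+i)(s-i)⁻¹` and `‖γ‖` is the operator norm of `γ`. -/
theorem imPart_cayley_tensor_bound
    {A : Type*} [NormedRing A] [StarRing A] [CStarRing A] [NormedAlgebra ℂ A]
    [CompleteSpace A] [StarModule ℂ A]
    {B : Type*} [NormedRing B] [StarRing B] [CStarRing B] [NormedAlgebra ℂ B]
    [CompleteSpace B] [StarModule ℂ B]
    {m : ℕ}
    (φ : Matrix (Fin m) (Fin m) ℂ →⋆ₐ[ℂ] B) (ι : A →⋆ₐ[ℂ] B)
    (hcomm : ∀ (γ : Matrix (Fin m) (Fin m) ℂ) (a : A), φ γ * ι a = ι a * φ γ)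
    (s : A) (ε : ℝ) (hε0 : 0 < ε) (hε1 : ε < 1) (hIm : ‖imPart s‖ < ε)
    (γ : Matrix (Fin m) (Fin m) ℂ) :
    ‖imPart (φ γ * ι ((s + Complex.I • (1 : A)) * Ring.inverse (s - Complex.I • (1 : A))) +
        φ (star γ) * ι ((s - Complex.I • (1 : A)) * Ring.inverse (s + Complex.I • (1 : A))))‖ ≤
      4 * ‖γ‖ * ε / (1 - ε) ^ 2 := by
  rcases subsingleton_or_nontrivial A with hA | hA
  · have h0 : ∀ t : A, ι t = 0 := fun t => by rw [Subsingleton.elim t 0, map_zero]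
    rw [h0, h0, mul_zero, mul_zero, add_zero]
    have h1 : imPart (0 : B) = 0 := by simp [imPart]
    rw [h1, norm_zero]
    positivity
  letI : CStarAlgebra A := { }
  letI : CStarAlgebra B := { }
  letI : CStarAlgebra (Matrix (Fin m) (Fin m) ℂ) := { }
  haveI : NormedStarGroup (Matrix (Fin m) (Fin m) ℂ) := CStarRing.to_normedStarGroup
  letI : PartialOrder A := CStarAlgebra.spectralOrder A
  haveI : StarOrderedRing A := CStarAlgebra.spectralOrderedRing A
  have h2I : ((2 : ℂ) * Complex.I) ≠ 0 := by simp [Complex.I_ne_zero]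
  set b : A := imPart s with hbdef
  have hb : IsSelfAdjoint b := by
    have hsc : star ((2 * Complex.I)⁻¹ : ℂ) = -(2 * Complex.I)⁻¹ := by
      simp [Complex.star_def, map_inv₀, Complex.conj_I]
    rw [IsSelfAdjoint, hbdef, imPart, star_smul, star_sub, star_star, hsc,
      neg_smul, ← smul_neg, neg_sub]
  set a : A := (2 : ℂ)⁻¹ • (s + star s) with hadef
  have ha : IsSelfAdjoint a := by
    have hsc : star ((2 : ℂ)⁻¹) = (2 : ℂ)⁻¹ := by
      simp [Complex.star_def, map_inv₀]
    rw [IsSelfAdjoint, hadef, star_smul, star_add, star_star, hsc, add_comm]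
  have hs : a + Complex.I • b = s := by
    have hsc : Complex.I * (2 * Complex.I)⁻¹ = (2 : ℂ)⁻¹ := by
      field_simp
    rw [hbdef, imPart, smul_smul, hsc, hadef, ← smul_add]
    have h3 : (s + star s) + (s - star s) = (2 : ℂ) • s := by
      rw [two_smul]; abel
    rw [h3, smul_smul]
    norm_num
  have hbe : ‖b‖ < ε := hIm
  have hδ : (0 : ℝ) < 1 - ε := by linarith
  -- geometric series bounds for 1 ± b
  have hgeom : ∀ t : A, IsSelfAdjoint t → ‖t‖ < ε →
      IsUnit (1 - t) ∧ ‖Ring.inverse (1 - t)‖ ≤ (1 - ε)⁻¹ ∧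
        algebraMap ℝ A (1 - ε) ≤ 1 - t := by
    intro t hts htε
    have ht1 : ‖t‖ < 1 := htε.trans hε1
    refine ⟨(Units.oneSub t ht1).isUnit, ?_, ?_⟩
    · rw [← geom_series_eq_inverse t ht1]
      have h1 := tsum_geometric_le_of_norm_lt_one t ht1
      rw [CStarRing.norm_one] at h1
      have h2 : (1 - ‖t‖)⁻¹ ≤ (1 - ε)⁻¹ := by
        apply inv_anti₀ hδ
        linarith
      linarith
    · have h1 : t ≤ algebraMap ℝ A ε :=
        hts.le_algebraMap_norm_self.trans (algMapMono htε.le)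
      calc algebraMap ℝ A (1 - ε) = 1 - algebraMap ℝ A ε := by rw [map_sub, map_one]
        _ ≤ 1 - t := sub_le_sub_left h1 1
  obtain ⟨hu1, hn1, hle1⟩ := hgeom b hb hbe
  obtain ⟨hu2, hn2, hle2⟩ := hgeom (-b) hb.neg (by rwa [norm_neg])
  rw [sub_neg_eq_add] at hu2 hn2 hle2
  -- invertibility of s ± i
  have h1b : IsSelfAdjoint ((1 : A) - b) := (IsSelfAdjoint.one (R := A)).sub hb
  have h1b' : IsSelfAdjoint ((1 : A) + b) := (IsSelfAdjoint.one (R := A)).add hb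
  have hplus := aux_unit ha h1b' hδ hle2 hn2
  have hminus := aux_unit ha h1b hδ hle1 hn1
  have heq2 : a + Complex.I • ((1 : A) + b) = s + Complex.I • 1 := by
    rw [smul_add, ← hs]; abel
  have heq1 : star (a + Complex.I • ((1 : A) - b)) = s - Complex.I • 1 := by
    rw [star_add, ha.star_eq, star_smul, h1b.star_eq, Complex.star_def, Complex.conj_I,
      neg_smul, smul_sub, ← hs]
    abel
  rw [heq2] at hplus
  have hu_p : IsUnit (s + Complex.I • (1 : A)) := hplus.1
  have hn_p : ‖Ring.inverse (s + Complex.I • (1 : A))‖ ≤ (1 - ε)⁻¹ := hplus.2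
  have hu_m : IsUnit (s - Complex.I • (1 : A)) := heq1 ▸ hminus.1.star
  have hn_m : ‖Ring.inverse (s - Complex.I • (1 : A))‖ ≤ (1 - ε)⁻¹ := by
    rw [← heq1, Ring.inverse_star, norm_star]
    exact hminus.2
  -- the two algebraic identities
  have hid1 := aux_id s Complex.I (by simp [Complex.star_def, Complex.conj_I])
    Complex.I_ne_zero hu_m hu_p
  have hid2 := aux_id s (-Complex.I) (by simp [Complex.star_def, Complex.conj_I])
    (neg_ne_zero.mpr Complex.I_ne_zero) (by rwa [neg_smul, sub_neg_eq_add]) (by rwa [neg_smul, ← sub_eq_add_neg])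
  simp only [neg_smul, sub_neg_eq_add, ← sub_eq_add_neg] at hid2
  set w₁ := Ring.inverse (s - Complex.I • (1 : A)) with hw₁
  set w₂ := Ring.inverse (s + Complex.I • (1 : A)) with hw₂
  set Ψ₁ := (s + Complex.I • (1 : A)) * w₁ with hΨ₁
  set Ψ₂ := (s - Complex.I • (1 : A)) * w₂ with hΨ₂
  -- hid2 has scalar (2 * -I)⁻¹; convert
  have hid2' : (2 * Complex.I)⁻¹ • (Ψ₂ - star Ψ₁)
      = -(star w₁ * (star s - s) * w₂) := by
    have hmu : ((2 : ℂ) * -Complex.I)⁻¹ = -((2 : ℂ) * Complex.I)⁻¹ := by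
      rw [mul_neg, ← neg_inv]
    rw [hmu] at hid2
    rw [← hid2, neg_smul, neg_neg]
  -- norm of star s - s
  have hss : ‖star s - s‖ ≤ 2 * ε := by
    have h4 : s - star s = ((2 : ℂ) * Complex.I) • b := by
      rw [hbdef, imPart, smul_smul, mul_inv_cancel₀ h2I, one_smul]
    have h5 : star s - s = -(((2 : ℂ) * Complex.I) • b) := by rw [← h4]; abel
    rw [h5, norm_neg, norm_smul]
    have h6 : ‖((2 : ℂ) * Complex.I)‖ = 2 := by
      simp
    rw [h6]
    linarith
  -- rewrite the imaginary part
  set T := φ γ * ι Ψ₁ + φ (star γ) * ι Ψ₂ with hT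
  have himT : imPart T = φ γ * ι ((2 * Complex.I)⁻¹ • (Ψ₁ - star Ψ₂))
      + φ (star γ) * ι ((2 * Complex.I)⁻¹ • (Ψ₂ - star Ψ₁)) := by
    rw [imPart, hT, star_add, star_mul, star_mul, ← map_star φ, ← map_star φ, star_star,
      ← map_star ι, ← map_star ι, ← hcomm (star γ) (star Ψ₁), ← hcomm γ (star Ψ₂),
      map_smul, map_smul, map_sub, map_sub, mul_smul_comm, mul_smul_comm, ← smul_add]
    congr 1
    rw [mul_sub, mul_sub]
    abel
  -- the norm bounds
  have hnD1 : ‖ι ((2 * Complex.I)⁻¹ • (Ψ₁ - star Ψ₂))‖ ≤ (1 - ε)⁻¹ * (2 * ε) * (1 - ε)⁻¹ := by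
    refine (NonUnitalStarAlgHom.norm_apply_le ι _).trans ?_
    rw [hid1]
    calc ‖star w₂ * (star s - s) * w₁‖ ≤ ‖star w₂ * (star s - s)‖ * ‖w₁‖ := norm_mul_le _ _
      _ ≤ ‖star w₂‖ * ‖star s - s‖ * ‖w₁‖ :=
          mul_le_mul_of_nonneg_right (norm_mul_le _ _) (norm_nonneg _)
      _ ≤ (1 - ε)⁻¹ * (2 * ε) * (1 - ε)⁻¹ := by
          rw [norm_star]
          have h7 : (0:ℝ) ≤ (1 - ε)⁻¹ := by positivity
          apply mul_le_mul _ hn_m (norm_nonneg _) (by positivity)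
          exact mul_le_mul hn_p hss (norm_nonneg _) h7
  have hnD2 : ‖ι ((2 * Complex.I)⁻¹ • (Ψ₂ - star Ψ₁))‖ ≤ (1 - ε)⁻¹ * (2 * ε) * (1 - ε)⁻¹ := by
    refine (NonUnitalStarAlgHom.norm_apply_le ι _).trans ?_
    rw [hid2', norm_neg]
    calc ‖star w₁ * (star s - s) * w₂‖ ≤ ‖star w₁ * (star s - s)‖ * ‖w₂‖ := norm_mul_le _ _
      _ ≤ ‖star w₁‖ * ‖star s - s‖ * ‖w₂‖ :=
          mul_le_mul_of_nonneg_right (norm_mul_le _ _) (norm_nonneg _)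
      _ ≤ (1 - ε)⁻¹ * (2 * ε) * (1 - ε)⁻¹ := by
          rw [norm_star]
          have h7 : (0:ℝ) ≤ (1 - ε)⁻¹ := by positivity
          apply mul_le_mul _ hn_p (norm_nonneg _) (by positivity)
          exact mul_le_mul hn_m hss (norm_nonneg _) h7
  calc ‖imPart T‖
      ≤ ‖φ γ * ι ((2 * Complex.I)⁻¹ • (Ψ₁ - star Ψ₂))‖
        + ‖φ (star γ) * ι ((2 * Complex.I)⁻¹ • (Ψ₂ - star Ψ₁))‖ := by
        rw [himT]; exact norm_add_le _ _
    _ ≤ ‖φ γ‖ * ‖ι ((2 * Complex.I)⁻¹ • (Ψ₁ - star Ψ₂))‖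
        + ‖φ (star γ)‖ * ‖ι ((2 * Complex.I)⁻¹ • (Ψ₂ - star Ψ₁))‖ :=
        add_le_add (norm_mul_le _ _) (norm_mul_le _ _)
    _ ≤ ‖γ‖ * ((1 - ε)⁻¹ * (2 * ε) * (1 - ε)⁻¹)
        + ‖γ‖ * ((1 - ε)⁻¹ * (2 * ε) * (1 - ε)⁻¹) := by
        refine add_le_add
          (mul_le_mul (NonUnitalStarAlgHom.norm_apply_le φ γ) hnD1 (norm_nonneg _)
            (norm_nonneg _))
          (mul_le_mul ?_ hnD2 (norm_nonneg _) (norm_nonneg _))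
        have hγs : ‖star γ‖ = ‖γ‖ := norm_star γ
        exact (NonUnitalStarAlgHom.norm_apply_le φ (star γ)).trans_eq hγs
    _ = 4 * ‖γ‖ * ε / (1 - ε) ^ 2 := by
        field_simp
        ring
end
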